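/- Let ℓ_1, ..., ℓ_n : ℝ^d → ℝ be convex, G-Lipschitz, L-smooth, let μ > 0, let σ ∈ ℝⁿ be non-negative with Σσ_i = 1, and let ν ≥ 4nG²/μ. Define Φ(w, λ) := Σ_{i=1}^n λ_i ℓ_i(w) + (μ/2)‖w‖₂² − (ν/2)‖λ − u_n‖₂² on ℝ^d × P(σ), with unique saddle point (w*, λ*) (so w* = argmin_w max_{λ ∈ P(σ)} Φ(w, λ)). Fix w ∈ ℝ^d, set λ̄ := argmax_{λ ∈ P(σ)} Φ(w, λ) and w₊* := argmin_{w' ∈ ℝ^d} Φ(w', λ̄). If w₊ is a random vector satisfying E‖w₊ − w₊*‖₂ ≤ (1/5)‖w − w₊*‖₂, then E‖w₊ − w*‖₂ ≤ (1/2)‖w − w*‖₂. -/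

import Mathlib

open MeasureTheory ProbabilityTheory Filter Topology
open scoped NNReal ENNReal

/-- The permutahedron generated by `σ`, as a subset of Euclidean space: the image of `σ`
under all doubly stochastic matrices. -/
def permutahedronE {n : ℕ} (σ : Fin n → ℝ) : Set (EuclideanSpace ℝ (Fin n)) :=
  {lam | ∃ P : Matrix (Fin n) (Fin n) ℝ,
    (∀ i j, P i j ∈ Set.Icc (0 : ℝ) 1) ∧ (∀ i, ∑ j, P i j = 1) ∧ (∀ j, ∑ i, P i j = 1) ∧
    ∀ i, lam i = ∑ j, P i j * σ j}

/-- The saddle function `Φ(w, λ) = ∑ᵢ λᵢ ℓᵢ(w) + (μ/2)‖w‖² − (ν/2)‖λ − 𝟏/n‖²`. -/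
noncomputable def Phi {d n : ℕ} (ℓ : Fin n → EuclideanSpace ℝ (Fin d) → ℝ) (μ ν : ℝ)
    (w : EuclideanSpace ℝ (Fin d)) (lam : EuclideanSpace ℝ (Fin n)) : ℝ :=
  (∑ i, lam i * ℓ i w) + μ / 2 * ‖w‖ ^ 2 - ν / 2 * ∑ i, (lam i - 1 / n) ^ 2

/-! ### Auxiliary lemmas -/

/-- Quadratic growth at a minimizer of a strongly-convex-along-segments function. -/
lemma quad_growth_aux {E : Type*} [NormedAddCommGroup E] [NormedSpace ℝ E]
    (f : E → ℝ) (s : Set E) (hs : Convex ℝ s) (c : ℝ)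
    (hSC : ∀ x ∈ s, ∀ y ∈ s, ∀ t : ℝ, 0 ≤ t → t ≤ 1 →
      f ((1 - t) • x + t • y) ≤ (1 - t) * f x + t * f y - c / 2 * (t * (1 - t)) * ‖x - y‖ ^ 2)
    (xs : E) (hxs : xs ∈ s) (hmin : IsMinOn f s xs)
    (y : E) (hy : y ∈ s) :
    f xs + c / 2 * ‖xs - y‖ ^ 2 ≤ f y := by
  have key : ∀ t ∈ Set.Ioo (0:ℝ) 1, c / 2 * (1 - t) * ‖xs - y‖ ^ 2 ≤ f y - f xs := by
    intro t ht
    have hmem : (1 - t) • xs + t • y ∈ s :=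
      hs hxs hy (by linarith [ht.2]) ht.1.le (by ring)
    have h1 : f xs ≤ f ((1 - t) • xs + t • y) := hmin hmem
    have h2 := hSC xs hxs y hy t ht.1.le ht.2.le
    have h0 := h1.trans h2
    have h3 : t * f xs ≤ t * (f y - c / 2 * (1 - t) * ‖xs - y‖ ^ 2) := by nlinarith [h0]
    have h4 := (mul_le_mul_iff_right₀ ht.1).mp h3
    linarith
  have hlim : Tendsto (fun t : ℝ => c / 2 * (1 - t) * ‖xs - y‖ ^ 2) (𝓝[>] (0:ℝ))
      (𝓝 (c / 2 * ‖xs - y‖ ^ 2)) := by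
    have hcont : Continuous (fun t : ℝ => c / 2 * (1 - t) * ‖xs - y‖ ^ 2) := by continuity
    have := hcont.tendsto 0
    simp only [sub_zero, mul_one] at this
    exact this.mono_left nhdsWithin_le_nhds
  have hev : ∀ᶠ t in 𝓝[>] (0:ℝ), c / 2 * (1 - t) * ‖xs - y‖ ^ 2 ≤ f y - f xs := by
    filter_upwards [Ioo_mem_nhdsGT_of_mem (Set.left_mem_Ico.mpr one_pos)] with t ht
    exact key t ht
  have := le_of_tendsto hlim hev
  linarith

lemma eucl_norm_sq_aux {m : ℕ} (x : EuclideanSpace ℝ (Fin m)) : ‖x‖ ^ 2 = ∑ i, x i ^ 2 := by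
  rw [EuclideanSpace.norm_eq, Real.sq_sqrt (by positivity)]
  exact Finset.sum_congr rfl fun i _ => by rw [Real.norm_eq_abs, sq_abs]

lemma eucl_comb_apply_aux {m : ℕ} (x y : EuclideanSpace ℝ (Fin m)) (s t : ℝ) (i : Fin m) :
    (s • x + t • y) i = s * x i + t * y i := rfl

lemma perm_convex_aux {n : ℕ} (σ : Fin n → ℝ) : Convex ℝ (permutahedronE σ) := by
  rintro x ⟨P, hP01, hPr, hPc, hPx⟩ y ⟨Q, hQ01, hQr, hQc, hQy⟩ a b ha hb hab
  refine ⟨a • P + b • Q, fun i j => ?_, fun i => ?_, fun j => ?_, fun i => ?_⟩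
  · have h1 := (hP01 i j).1; have h2 := (hP01 i j).2
    have h3 := (hQ01 i j).1; have h4 := (hQ01 i j).2
    constructor
    · simp only [Matrix.add_apply, Matrix.smul_apply, smul_eq_mul]
      positivity
    · simp only [Matrix.add_apply, Matrix.smul_apply, smul_eq_mul]
      nlinarith
  · simp only [Matrix.add_apply, Matrix.smul_apply, smul_eq_mul, Finset.sum_add_distrib,
      ← Finset.mul_sum, hPr, hQr]
    linarith
  · simp only [Matrix.add_apply, Matrix.smul_apply, smul_eq_mul, Finset.sum_add_distrib,
      ← Finset.mul_sum, hPc, hQc]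
    linarith
  · rw [eucl_comb_apply_aux, hPx, hQy, Finset.mul_sum, Finset.mul_sum, ← Finset.sum_add_distrib]
    exact Finset.sum_congr rfl fun j _ => by
      simp only [Matrix.add_apply, Matrix.smul_apply, smul_eq_mul]; ring

lemma perm_nonneg_aux {n : ℕ} {σ : Fin n → ℝ} (hσ : ∀ i, 0 ≤ σ i)
    {lam : EuclideanSpace ℝ (Fin n)} (h : lam ∈ permutahedronE σ) (i : Fin n) : 0 ≤ lam i := by
  obtain ⟨P, hP01, -, -, hPx⟩ := h
  rw [hPx]
  exact Finset.sum_nonneg fun j _ => mul_nonneg (hP01 i j).1 (hσ j)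

/-- Strong convexity inequality for `Phi` in `w`. -/
lemma phi_sc_w_aux {d n : ℕ} (ℓ : Fin n → EuclideanSpace ℝ (Fin d) → ℝ)
    (hconv : ∀ i, ConvexOn ℝ Set.univ (ℓ i)) (μ ν : ℝ)
    (lam : EuclideanSpace ℝ (Fin n)) (hlam : ∀ i, 0 ≤ lam i)
    (x y : EuclideanSpace ℝ (Fin d)) (t : ℝ) (ht0 : 0 ≤ t) (ht1 : t ≤ 1) :
    Phi ℓ μ ν ((1 - t) • x + t • y) lam ≤
      (1 - t) * Phi ℓ μ ν x lam + t * Phi ℓ μ ν y lam - μ / 2 * (t * (1 - t)) * ‖x - y‖ ^ 2 := by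
  have h1 : ∑ i, lam i * ℓ i ((1 - t) • x + t • y) ≤
      (1 - t) * ∑ i, lam i * ℓ i x + t * ∑ i, lam i * ℓ i y := by
    rw [Finset.mul_sum, Finset.mul_sum, ← Finset.sum_add_distrib]
    refine Finset.sum_le_sum fun i _ => ?_
    have := (hconv i).2 (Set.mem_univ x) (Set.mem_univ y) (by linarith : (0:ℝ) ≤ 1 - t) ht0
      (by ring)
    calc lam i * ℓ i ((1 - t) • x + t • y) ≤ lam i * ((1-t) * ℓ i x + t * ℓ i y) :=
          mul_le_mul_of_nonneg_left this (hlam i)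
      _ = (1 - t) * (lam i * ℓ i x) + t * (lam i * ℓ i y) := by ring
  have h2 : ‖(1 - t) • x + t • y‖ ^ 2 =
      (1 - t) * ‖x‖ ^ 2 + t * ‖y‖ ^ 2 - (t * (1 - t)) * ‖x - y‖ ^ 2 := by
    rw [eucl_norm_sq_aux, eucl_norm_sq_aux, eucl_norm_sq_aux, eucl_norm_sq_aux, Finset.mul_sum,
      Finset.mul_sum, Finset.mul_sum, ← Finset.sum_add_distrib, ← Finset.sum_sub_distrib]
    refine Finset.sum_congr rfl fun i _ => ?_
    have hxy : (x - y) i = x i - y i := rfl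
    rw [eucl_comb_apply_aux, hxy]; ring
  simp only [Phi]
  rw [h2]
  nlinarith [h1]

/-- Exact combination identity for `Phi` in `lam`. -/
lemma phi_sc_lam_aux {d n : ℕ} (ℓ : Fin n → EuclideanSpace ℝ (Fin d) → ℝ) (μ ν : ℝ)
    (w : EuclideanSpace ℝ (Fin d))
    (x y : EuclideanSpace ℝ (Fin n)) (t : ℝ) :
    Phi ℓ μ ν w ((1 - t) • x + t • y) =
      (1 - t) * Phi ℓ μ ν w x + t * Phi ℓ μ ν w y + ν / 2 * (t * (1 - t)) * ‖x - y‖ ^ 2 := by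
  have h1 : ∑ i, ((1 - t) • x + t • y) i * ℓ i w =
      (1 - t) * ∑ i, x i * ℓ i w + t * ∑ i, y i * ℓ i w := by
    rw [Finset.mul_sum, Finset.mul_sum, ← Finset.sum_add_distrib]
    exact Finset.sum_congr rfl fun i _ => by rw [eucl_comb_apply_aux]; ring
  have h2 : ∑ i, (((1 - t) • x + t • y) i - 1 / n) ^ 2 =
      (1 - t) * ∑ i, (x i - 1 / n) ^ 2 + t * ∑ i, (y i - 1 / n) ^ 2
        - (t * (1 - t)) * ‖x - y‖ ^ 2 := by
    rw [eucl_norm_sq_aux, Finset.mul_sum, Finset.mul_sum, Finset.mul_sum,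
      ← Finset.sum_add_distrib, ← Finset.sum_sub_distrib]
    refine Finset.sum_congr rfl fun i _ => ?_
    have hxy : (x - y) i = x i - y i := rfl
    rw [eucl_comb_apply_aux, hxy]; ring
  simp only [Phi]
  rw [h1, h2]; ring

/-- Cauchy–Schwarz cross bound. -/
lemma cross_bound_aux {d n : ℕ} (ℓ : Fin n → EuclideanSpace ℝ (Fin d) → ℝ)
    (G : ℝ≥0) (hlip : ∀ i, LipschitzWith G (ℓ i))
    (p q : EuclideanSpace ℝ (Fin n)) (u v : EuclideanSpace ℝ (Fin d)) :
    ∑ i, (p i - q i) * (ℓ i u - ℓ i v) ≤ Real.sqrt n * G * ‖p - q‖ * ‖u - v‖ := by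
  have hCS := Finset.sum_mul_sq_le_sq_mul_sq Finset.univ
    (fun i => p i - q i) (fun i => ℓ i u - ℓ i v)
  have h3 : ∑ i, (p i - q i) ^ 2 = ‖p - q‖ ^ 2 := by
    rw [eucl_norm_sq_aux]; exact Finset.sum_congr rfl fun i _ => rfl
  have h4 : ∑ i, (ℓ i u - ℓ i v) ^ 2 ≤ n * ((G:ℝ) * ‖u - v‖) ^ 2 := by
    calc ∑ i, (ℓ i u - ℓ i v) ^ 2 ≤ ∑ _i : Fin n, ((G:ℝ) * ‖u - v‖) ^ 2 := by
          refine Finset.sum_le_sum fun i _ => ?_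
          have hd := (hlip i).dist_le_mul u v
          rw [Real.dist_eq, dist_eq_norm] at hd
          nlinarith [hd, abs_nonneg (ℓ i u - ℓ i v), sq_abs (ℓ i u - ℓ i v)]
      _ = n * ((G:ℝ) * ‖u - v‖) ^ 2 := by
          rw [Finset.sum_const, Finset.card_univ, Fintype.card_fin, nsmul_eq_mul]
  set X := ∑ i, (p i - q i) * (ℓ i u - ℓ i v) with hX
  set R := Real.sqrt n * G * ‖p - q‖ * ‖u - v‖ with hR
  have hRnn : 0 ≤ R := by positivity
  have hX2 : X ^ 2 ≤ R ^ 2 := by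
    calc X ^ 2 ≤ (∑ i, (p i - q i) ^ 2) * ∑ i, (ℓ i u - ℓ i v) ^ 2 := hCS
      _ ≤ ‖p - q‖ ^ 2 * (n * ((G:ℝ) * ‖u - v‖) ^ 2) := by
          rw [h3]; exact mul_le_mul_of_nonneg_left h4 (sq_nonneg _)
      _ = R ^ 2 := by
          have hn : Real.sqrt n ^ 2 = (n : ℝ) := Real.sq_sqrt (Nat.cast_nonneg n)
          rw [hR]; simp only [mul_pow]; rw [hn]; ring
  calc X ≤ |X| := le_abs_self X
    _ = Real.sqrt (X ^ 2) := (Real.sqrt_sq_eq_abs X).symm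
    _ ≤ Real.sqrt (R ^ 2) := Real.sqrt_le_sqrt hX2
    _ = R := Real.sqrt_sq hRnn

/-- Pairing identity for `Phi` differences in `w`. -/
lemma phi_pair_w_aux {d n : ℕ} (ℓ : Fin n → EuclideanSpace ℝ (Fin d) → ℝ) (μ ν : ℝ)
    (u v : EuclideanSpace ℝ (Fin d)) (p q : EuclideanSpace ℝ (Fin n)) :
    (Phi ℓ μ ν u p - Phi ℓ μ ν v p) + (Phi ℓ μ ν v q - Phi ℓ μ ν u q) =
      ∑ i, (p i - q i) * (ℓ i u - ℓ i v) := by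
  have e : ∑ i, (p i - q i) * (ℓ i u - ℓ i v) =
      ((∑ i, p i * ℓ i u) - (∑ i, p i * ℓ i v)) +
        ((∑ i, q i * ℓ i v) - (∑ i, q i * ℓ i u)) := by
    simp only [sub_mul, mul_sub, Finset.sum_sub_distrib]; ring
  simp only [Phi]; rw [e]; ring

/-- Pairing identity for `Phi` differences in `lam`. -/
lemma phi_pair_lam_aux {d n : ℕ} (ℓ : Fin n → EuclideanSpace ℝ (Fin d) → ℝ) (μ ν : ℝ)
    (u v : EuclideanSpace ℝ (Fin d)) (p q : EuclideanSpace ℝ (Fin n)) :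
    (Phi ℓ μ ν u p - Phi ℓ μ ν u q) + (Phi ℓ μ ν v q - Phi ℓ μ ν v p) =
      ∑ i, (p i - q i) * (ℓ i u - ℓ i v) := by
  have e : ∑ i, (p i - q i) * (ℓ i u - ℓ i v) =
      ((∑ i, p i * ℓ i u) - (∑ i, q i * ℓ i u)) +
        ((∑ i, q i * ℓ i v) - (∑ i, p i * ℓ i v)) := by
    simp only [sub_mul, mul_sub, Finset.sum_sub_distrib]; ring
  simp only [Phi]; rw [e]; ring

/-- The purely arithmetic contraction step. -/
lemma stepC_aux (a b c s μ ν : ℝ) (ha : 0 ≤ a) (hb : 0 ≤ b) (hc : 0 ≤ c) (hs : 0 ≤ s)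
    (hμ : 0 < μ) (hμν : 4 * s ^ 2 ≤ μ * ν)
    (hA : μ * a ^ 2 ≤ s * b * a) (hB : ν * b ^ 2 ≤ s * b * c) : a ≤ 1 / 4 * c := by
  rcases ha.eq_or_lt with h | h
  · nlinarith
  have hμa : μ * a ≤ s * b := le_of_mul_le_mul_right (by nlinarith) h
  have hsb : 0 < s * b := lt_of_lt_of_le (mul_pos hμ h) hμa
  have hbpos : 0 < b := by nlinarith
  have hνb : ν * b ≤ s * c := le_of_mul_le_mul_right (by nlinarith) hbpos
  have hspos : 0 < s := by nlinarith
  have hνpos : 0 < ν := by nlinarith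
  have h4 : μ * ν * a ≤ μ * ν * (1 / 4 * c) := by nlinarith
  exact le_of_mul_le_mul_left h4 (mul_pos hμ hνpos)

/-- One-step contraction of the inexact alternating scheme for the smoothed
saddle problem: if `ν ≥ 4nG²/μ`, `(w*, λ*)` is the saddle point of `Φ`, `λ̄` maximizes
`Φ(w, ·)` over `P(σ)`, `w₊*` minimizes `Φ(·, λ̄)`, and the random iterate `w₊` satisfies
`E‖w₊ − w₊*‖ ≤ (1/5)‖w − w₊*‖`, then `E‖w₊ − w*‖ ≤ (1/2)‖w − w*‖`. -/
theorem stmt19 {d n : ℕ}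
    {Ωs : Type*} [MeasureSpace Ωs] [IsProbabilityMeasure (ℙ : Measure Ωs)]
    (ℓ : Fin n → EuclideanSpace ℝ (Fin d) → ℝ)
    (hconv : ∀ i, ConvexOn ℝ Set.univ (ℓ i))
    (G : ℝ≥0) (hlip : ∀ i, LipschitzWith G (ℓ i))
    (gradℓ : Fin n → EuclideanSpace ℝ (Fin d) → EuclideanSpace ℝ (Fin d))
    (hgrad : ∀ i w, HasGradientAt (ℓ i) (gradℓ i w) w)
    (L : ℝ≥0) (hsmooth : ∀ i, LipschitzWith L (gradℓ i))
    (μ : ℝ) (hμ : 0 < μ)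
    (σ : Fin n → ℝ) (hσ_nonneg : ∀ i, 0 ≤ σ i) (hσ_sum : ∑ i, σ i = 1)
    (ν : ℝ) (hν : 4 * n * (G : ℝ) ^ 2 / μ ≤ ν)
    -- the saddle point (w*, λ*)
    (wstar : EuclideanSpace ℝ (Fin d)) (lamstar : EuclideanSpace ℝ (Fin n))
    (hlamstar_mem : lamstar ∈ permutahedronE σ)
    (hwstar : IsMinOn (fun w' => Phi ℓ μ ν w' lamstar) Set.univ wstar)
    (hlamstar : IsMaxOn (fun lam' => Phi ℓ μ ν wstar lam') (permutahedronE σ) lamstar)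
    -- the current point, the exact dual and primal updates
    (w : EuclideanSpace ℝ (Fin d))
    (lambar : EuclideanSpace ℝ (Fin n)) (hlambar_mem : lambar ∈ permutahedronE σ)
    (hlambar : IsMaxOn (fun lam' => Phi ℓ μ ν w lam') (permutahedronE σ) lambar)
    (wps : EuclideanSpace ℝ (Fin d))
    (hwps : IsMinOn (fun w' => Phi ℓ μ ν w' lambar) Set.univ wps)
    -- the random inexact primal update
    (wplus : Ωs → EuclideanSpace ℝ (Fin d)) (hwplus : Measurable wplus)
    (hcontract : ∫⁻ ω, ENNReal.ofReal ‖wplus ω - wps‖ ∂ℙ ≤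
      ENNReal.ofReal (1 / 5 * ‖w - wps‖)) :
    ∫⁻ ω, ENNReal.ofReal ‖wplus ω - wstar‖ ∂ℙ ≤
      ENNReal.ofReal (1 / 2 * ‖w - wstar‖) := by
  -- Step A: strong convexity in w at the two minimizers
  have hA1 : Phi ℓ μ ν wstar lamstar + μ / 2 * ‖wstar - wps‖ ^ 2 ≤ Phi ℓ μ ν wps lamstar :=
    quad_growth_aux _ Set.univ convex_univ μ
      (fun x _ y _ t ht0 ht1 =>
        phi_sc_w_aux ℓ hconv μ ν lamstar (perm_nonneg_aux hσ_nonneg hlamstar_mem) x y t ht0 ht1)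
      wstar (Set.mem_univ _) hwstar wps (Set.mem_univ _)
  have hA2 : Phi ℓ μ ν wps lambar + μ / 2 * ‖wps - wstar‖ ^ 2 ≤ Phi ℓ μ ν wstar lambar :=
    quad_growth_aux _ Set.univ convex_univ μ
      (fun x _ y _ t ht0 ht1 =>
        phi_sc_w_aux ℓ hconv μ ν lambar (perm_nonneg_aux hσ_nonneg hlambar_mem) x y t ht0 ht1)
      wps (Set.mem_univ _) hwps wstar (Set.mem_univ _)
  -- Step B: strong concavity in lam at the two maximizers
  have hmin1 : IsMinOn (fun lam' => -Phi ℓ μ ν wstar lam') (permutahedronE σ) lamstar := by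
    intro x hx
    have h := hlamstar hx
    simp only [Set.mem_setOf_eq] at h ⊢
    exact neg_le_neg h
  have hmin2 : IsMinOn (fun lam' => -Phi ℓ μ ν w lam') (permutahedronE σ) lambar := by
    intro x hx
    have h := hlambar hx
    simp only [Set.mem_setOf_eq] at h ⊢
    exact neg_le_neg h
  have hSCneg : ∀ (u : EuclideanSpace ℝ (Fin d)), ∀ x ∈ permutahedronE σ,
      ∀ y ∈ permutahedronE σ, ∀ t : ℝ, 0 ≤ t → t ≤ 1 →
      -Phi ℓ μ ν u ((1 - t) • x + t • y) ≤
        (1 - t) * (-Phi ℓ μ ν u x) + t * (-Phi ℓ μ ν u y)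
          - ν / 2 * (t * (1 - t)) * ‖x - y‖ ^ 2 := by
    intro u x _ y _ t _ _
    rw [phi_sc_lam_aux ℓ μ ν u x y t]; ring_nf; exact le_refl _
  have hB1 : -Phi ℓ μ ν wstar lamstar + ν / 2 * ‖lamstar - lambar‖ ^ 2 ≤
      -Phi ℓ μ ν wstar lambar :=
    quad_growth_aux _ _ (perm_convex_aux σ) ν (hSCneg wstar) lamstar hlamstar_mem hmin1
      lambar hlambar_mem
  have hB2 : -Phi ℓ μ ν w lambar + ν / 2 * ‖lambar - lamstar‖ ^ 2 ≤ -Phi ℓ μ ν w lamstar :=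
    quad_growth_aux _ _ (perm_convex_aux σ) ν (hSCneg w) lambar hlambar_mem hmin2
      lamstar hlamstar_mem
  -- combine into the two key inequalities
  have hnsw : ‖wstar - wps‖ = ‖wps - wstar‖ := norm_sub_rev _ _
  have hnsl : ‖lambar - lamstar‖ = ‖lamstar - lambar‖ := norm_sub_rev _ _
  have hA : μ * ‖wps - wstar‖ ^ 2 ≤
      Real.sqrt n * G * ‖lamstar - lambar‖ * ‖wps - wstar‖ := by
    have hp := phi_pair_w_aux ℓ μ ν wps wstar lamstar lambar
    have hcb := cross_bound_aux ℓ G hlip lamstar lambar wps wstar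
    rw [hnsw] at hA1
    linarith
  have hB : ν * ‖lamstar - lambar‖ ^ 2 ≤
      Real.sqrt n * G * ‖lamstar - lambar‖ * ‖w - wstar‖ := by
    have hp := phi_pair_lam_aux ℓ μ ν wstar w lamstar lambar
    have hcb := cross_bound_aux ℓ G hlip lamstar lambar wstar w
    have hnw : ‖wstar - w‖ = ‖w - wstar‖ := norm_sub_rev _ _
    rw [hnsl] at hB2
    rw [hnw] at hcb
    linarith
  -- Step C: contraction of the exact update
  have hμν : 4 * (Real.sqrt n * G) ^ 2 ≤ μ * ν := by
    have h1 : 4 * (n : ℝ) * (G : ℝ) ^ 2 ≤ ν * μ := (div_le_iff₀ hμ).mp hν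
    have h2 : (Real.sqrt n * G) ^ 2 = n * (G : ℝ) ^ 2 := by
      rw [mul_pow, Real.sq_sqrt (Nat.cast_nonneg n)]
    rw [h2]; linarith
  have hC : ‖wps - wstar‖ ≤ 1 / 4 * ‖w - wstar‖ := by
    refine stepC_aux ‖wps - wstar‖ ‖lamstar - lambar‖ ‖w - wstar‖ (Real.sqrt n * G) μ ν (norm_nonneg _) (norm_nonneg _)
      (norm_nonneg _) (by positivity) hμ hμν ?_ ?_
    · nlinarith [hA]
    · nlinarith [hB]
  -- Step D: conclude via the triangle inequality under the integral
  have hreal : 1 / 5 * ‖w - wps‖ + ‖wps - wstar‖ ≤ 1 / 2 * ‖w - wstar‖ := by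
    have ht : ‖w - wps‖ ≤ ‖w - wstar‖ + ‖wstar - wps‖ := norm_sub_le_norm_sub_add_norm_sub _ _ _
    rw [hnsw] at ht
    linarith
  calc ∫⁻ ω, ENNReal.ofReal ‖wplus ω - wstar‖ ∂ℙ
      ≤ ∫⁻ ω, (ENNReal.ofReal ‖wplus ω - wps‖ + ENNReal.ofReal ‖wps - wstar‖) ∂ℙ := by
        refine lintegral_mono fun ω => ?_
        rw [← ENNReal.ofReal_add (norm_nonneg _) (norm_nonneg _)]
        exact ENNReal.ofReal_le_ofReal (norm_sub_le_norm_sub_add_norm_sub _ _ _)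
    _ = (∫⁻ ω, ENNReal.ofReal ‖wplus ω - wps‖ ∂ℙ) + ENNReal.ofReal ‖wps - wstar‖ := by
        rw [lintegral_add_right _ measurable_const, lintegral_const, measure_univ, mul_one]
    _ ≤ ENNReal.ofReal (1 / 5 * ‖w - wps‖) + ENNReal.ofReal ‖wps - wstar‖ :=
        add_le_add hcontract le_rfl
    _ = ENNReal.ofReal (1 / 5 * ‖w - wps‖ + ‖wps - wstar‖) :=
        (ENNReal.ofReal_add (by positivity) (norm_nonneg _)).symm
    _ ≤ ENNReal.ofReal (1 / 2 * ‖w - wstar‖) := ENNReal.ofReal_le_ofReal hreal
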